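/- The ideals satisfy M² ⊆ N and L² ⊆ M, but L² ⊄ N (indeed y² ∉ N). In particular, the binary relation on ideals of R given by 'I ≤ J iff I² ⊆ J' is not transitive. -/

import Mathlib

set_option synthInstance.maxHeartbeats 1000000

noncomputable section

/-- The one-dimensional `D₇` hypersurface singularity `R = k[x,y]/(x²y + y⁶)`. -/
abbrev D7Ring (k : Type u) [Field k] : Type u :=
  MvPolynomial (Fin 2) k ⧸
    Ideal.span {MvPolynomial.X 0 ^ 2 * MvPolynomial.X 1 +
      (MvPolynomial.X 1 : MvPolynomial (Fin 2) k) ^ 6}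

/-- `x`, the image of the first variable in `R`. -/
def d7x (k : Type u) [Field k] : D7Ring k :=
  Ideal.Quotient.mk _ (MvPolynomial.X 0)

/-- `y`, the image of the second variable in `R`. -/
def d7y (k : Type u) [Field k] : D7Ring k :=
  Ideal.Quotient.mk _ (MvPolynomial.X 1)

lemma sq_span_le {R : Type*} [CommRing R] {S : Set R} {J : Ideal R}
    (h : ∀ a ∈ S, ∀ b ∈ S, a * b ∈ J) : (Ideal.span S) ^ 2 ≤ J := by
  rw [pow_two, Ideal.span_mul_span, Ideal.span_le]
  intro z hz
  simp only [Set.mem_mul] at hz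
  obtain ⟨a, ha, b, hb, rfl⟩ := hz
  exact h a ha b hb

lemma aux_sq1 {R : Type*} [CommRing R] (x y : R) :
    (Ideal.span {x ^ 2, x * y, y ^ 2}) ^ 2 ≤ Ideal.span {x ^ 2, x * y, y ^ 3} := by
  have hN1 : x ^ 2 ∈ Ideal.span {x ^ 2, x * y, y ^ 3} :=
    Ideal.subset_span (Set.mem_insert _ _)
  have hN2 : x * y ∈ Ideal.span {x ^ 2, x * y, y ^ 3} :=
    Ideal.subset_span (Set.mem_insert_of_mem _ (Set.mem_insert _ _))
  have hN3 : y ^ 3 ∈ Ideal.span {x ^ 2, x * y, y ^ 3} :=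
    Ideal.subset_span (Set.mem_insert_of_mem _ (Set.mem_insert_of_mem _ rfl))
  apply sq_span_le
  intro a ha b hb
  simp only [Set.mem_insert_iff, Set.mem_singleton_iff] at ha hb
  rcases ha with rfl | rfl | rfl <;> rcases hb with rfl | rfl | rfl <;>
    first
      | exact Ideal.mul_mem_left _ _ hN1
      | exact Ideal.mul_mem_left _ _ hN2
      | exact Ideal.mul_mem_left _ _ hN3
      | exact Ideal.mul_mem_right _ _ hN1
      | exact Ideal.mul_mem_right _ _ hN2
      | exact Ideal.mul_mem_right _ _ hN3
      | (rw [show y ^ 2 * y ^ 2 = y * y ^ 3 by ring]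
         exact Ideal.mul_mem_left _ _ hN3)

lemma aux_sq2 {R : Type*} [CommRing R] (x y : R) :
    (Ideal.span {x, y}) ^ 2 ≤ Ideal.span {x ^ 2, x * y, y ^ 2} := by
  have hM1 : x ^ 2 ∈ Ideal.span {x ^ 2, x * y, y ^ 2} :=
    Ideal.subset_span (Set.mem_insert _ _)
  have hM2 : x * y ∈ Ideal.span {x ^ 2, x * y, y ^ 2} :=
    Ideal.subset_span (Set.mem_insert_of_mem _ (Set.mem_insert _ _))
  have hM3 : y ^ 2 ∈ Ideal.span {x ^ 2, x * y, y ^ 2} :=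
    Ideal.subset_span (Set.mem_insert_of_mem _ (Set.mem_insert_of_mem _ rfl))
  apply sq_span_le
  intro a ha b hb
  simp only [Set.mem_insert_iff, Set.mem_singleton_iff] at ha hb
  rcases ha with rfl | rfl <;> rcases hb with rfl | rfl <;>
    first
      | (rw [← pow_two]; exact hM1)
      | exact hM2
      | (rw [show a * b = b * a from mul_comm a b]; exact hM2)
      | (rw [← pow_two]; exact hM3)

/-- the target test ring `k[t]/(t³)` -/
abbrev D7Test (k : Type u) [Field k] : Type u :=
  Polynomial k ⧸ Ideal.span {(Polynomial.X : Polynomial k) ^ 3}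

/-- the map `k[x,y] → k[t]/(t³)`, `x ↦ 0`, `y ↦ t`. -/
def d7f (k : Type u) [Field k] : MvPolynomial (Fin 2) k →+* D7Test k :=
  (Ideal.Quotient.mk _).comp
    (MvPolynomial.aeval (R := k) ![0, (Polynomial.X : Polynomial k)]).toRingHom

/-- the induced map `R → k[t]/(t³)`. -/
def d7psi (k : Type u) [Field k] : D7Ring k →+* D7Test k :=
  Ideal.Quotient.lift _ (d7f k) (by
    intro a ha
    rw [Ideal.mem_span_singleton'] at ha
    obtain ⟨c, rfl⟩ := ha
    rw [map_mul]
    have : d7f k (MvPolynomial.X 0 ^ 2 * MvPolynomial.X 1 +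
        (MvPolynomial.X 1 : MvPolynomial (Fin 2) k) ^ 6) = 0 := by
      simp only [d7f, RingHom.comp_apply, map_add, map_mul, map_pow, AlgHom.toRingHom_eq_coe,
        RingHom.coe_coe, MvPolynomial.aeval_X]
      simp only [Matrix.cons_val_zero, Matrix.cons_val_one, Matrix.head_cons]
      rw [map_zero, ← map_pow]
      rw [show ((0:D7Test k)^2 * (Ideal.Quotient.mk _) Polynomial.X +
          (Ideal.Quotient.mk _) ((Polynomial.X : Polynomial k) ^ 6))
          = (Ideal.Quotient.mk _) ((Polynomial.X : Polynomial k) ^ 6) by ring]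
      rw [Ideal.Quotient.eq_zero_iff_mem, Ideal.mem_span_singleton]
      exact pow_dvd_pow _ (by norm_num)
    rw [this, mul_zero])

lemma d7psi_x (k : Type u) [Field k] : d7psi k (d7x k) = 0 := by
  simp [d7psi, d7x, d7f, Ideal.Quotient.lift_mk]

lemma d7psi_y (k : Type u) [Field k] :
    d7psi k (d7y k) = Ideal.Quotient.mk _ (Polynomial.X : Polynomial k) := by
  simp [d7psi, d7y, d7f, Ideal.Quotient.lift_mk]

lemma d7_y_sq_not_mem (k : Type u) [Field k] :
    d7y k ^ 2 ∉ Ideal.span {d7x k ^ 2, d7x k * d7y k, d7y k ^ 3} := by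
  intro h
  have key := Ideal.mem_map_of_mem (d7psi k) h
  rw [Ideal.map_span] at key
  have himg : (d7psi k) '' {d7x k ^ 2, d7x k * d7y k, d7y k ^ 3} ⊆ {0} := by
    rintro z ⟨w, hw, rfl⟩
    simp only [Set.mem_insert_iff, Set.mem_singleton_iff] at hw
    rcases hw with rfl | rfl | rfl
    · simp only [map_pow, d7psi_x, Set.mem_singleton_iff]
      rw [zero_pow (by norm_num : (2:ℕ) ≠ 0)]
    · simp only [map_mul, d7psi_x, Set.mem_singleton_iff, zero_mul]
    · rw [Set.mem_singleton_iff, map_pow, d7psi_y, ← map_pow,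
        Ideal.Quotient.eq_zero_iff_mem, Ideal.mem_span_singleton]
  have hle : Ideal.span ((d7psi k) '' {d7x k ^ 2, d7x k * d7y k, d7y k ^ 3}) ≤ ⊥ := by
    rw [← Ideal.span_singleton_eq_bot.mpr rfl]
    exact Ideal.span_mono himg
  have hz := hle key
  rw [Submodule.mem_bot, map_pow, d7psi_y, ← map_pow,
    Ideal.Quotient.eq_zero_iff_mem, Ideal.mem_span_singleton] at hz
  have := Polynomial.natDegree_le_of_dvd hz (pow_ne_zero 2 Polynomial.X_ne_zero)
  simp at this

theorem sq_subset_not_transitive (k : Type u) [Field k] :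
    (Ideal.span {d7x k ^ 2, d7x k * d7y k, d7y k ^ 2}) ^ 2 ≤
        Ideal.span {d7x k ^ 2, d7x k * d7y k, d7y k ^ 3} ∧
    (Ideal.span {d7x k, d7y k}) ^ 2 ≤
        Ideal.span {d7x k ^ 2, d7x k * d7y k, d7y k ^ 2} ∧
    d7y k ^ 2 ∉ Ideal.span {d7x k ^ 2, d7x k * d7y k, d7y k ^ 3} ∧
    ¬ (Ideal.span {d7x k, d7y k}) ^ 2 ≤
        Ideal.span {d7x k ^ 2, d7x k * d7y k, d7y k ^ 3} ∧
    ¬ Transitive (fun I J : Ideal (D7Ring k) => I ^ 2 ≤ J) := by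
  have hMN := aux_sq1 (d7x k) (d7y k)
  have hLM := aux_sq2 (d7x k) (d7y k)
  have hy2 := d7_y_sq_not_mem k
  have hLN : ¬ (Ideal.span {d7x k, d7y k}) ^ 2 ≤
      Ideal.span {d7x k ^ 2, d7x k * d7y k, d7y k ^ 3} := by
    intro h
    refine hy2 (h ?_)
    have hy : d7y k ∈ Ideal.span {d7x k, d7y k} :=
      Ideal.subset_span (Set.mem_insert_of_mem _ rfl)
    have := Ideal.mul_mem_mul hy hy
    rw [← pow_two] at this
    rw [pow_two (Ideal.span {d7x k, d7y k})]
    exact this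
  exact ⟨hMN, hLM, hy2, hLN, fun htr => hLN (htr hLM hMN)⟩

end
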